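/- Under the hypotheses s_m < s_i^0 < S_i, s_m < S_i < s_m·e^{R_M}, γ_i > 0 for all i, the unique global solution of the competition system admits, for every i and every t ≥ 0, the explicit representation s_i(t) = s_m·(s_i^0/s_m)^{e^{−γ_i t}} · exp( log(S_i/s_m)·γ_i·∫_0^t (1 − C_i^N(τ))·e^{γ_i(τ−t)} dτ ). -/

import Mathlib

open MeasureTheory Set Filter
open scoped Topology

/-- The pairwise competition potential
`C(s, s', d) = log(s'/s_m) / (2 R_M (1 + d²/σ_x²)) · (1 + tanh(log(s'/s)/σ_r))`. -/
noncomputable def pot (sm RM σx σr s s' d : ℝ) : ℝ :=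
  Real.log (s' / sm) / (2 * RM * (1 + d ^ 2 / σx ^ 2)) *
    (1 + Real.tanh (Real.log (s' / s) / σr))

/-- The competition index `C_i^N(t) = (1/(N-1)) Σ_{j≠i} C(s_i(t), s_j(t), |x_i - x_j|)`. -/
noncomputable def cIdx (sm RM σx σr : ℝ) {N : ℕ}
    (x : Fin N → EuclideanSpace ℝ (Fin 2)) (s : Fin N → ℝ → ℝ) (i : Fin N) (t : ℝ) : ℝ :=
  (1 / ((N : ℝ) - 1)) *
    ∑ j ∈ Finset.univ.erase i, pot sm RM σx σr (s i t) (s j t) (dist (x i) (x j))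

/-- `s : Fin N → ℝ → ℝ` is a global solution (on `ℝ₊`) of the competition system
`ds_i/dt = γ_i s_i (log(S_i/s_m)(1 − C_i^N(t)) − log(s_i/s_m))`, `s_i(0) = s_i^0`. -/
def IsCompetitionSol (sm RM σx σr : ℝ) {N : ℕ} (s0 : Fin N → ℝ)
    (x : Fin N → EuclideanSpace ℝ (Fin 2)) (Sa γ : Fin N → ℝ) (s : Fin N → ℝ → ℝ) : Prop :=
  ∀ i, s i 0 = s0 i ∧ ∀ t, 0 ≤ t →
    HasDerivWithinAt (s i)
      (γ i * s i t * (Real.log (Sa i / sm) * (1 - cIdx sm RM σx σr x s i t)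
        - Real.log (s i t / sm)))
      (Set.Ici 0) t

/- Auxiliary lemmas -/

lemma tanh_lt_one' (x : ℝ) : Real.tanh x < 1 := by
  rw [Real.tanh_eq_sinh_div_cosh, div_lt_one (Real.cosh_pos x)]
  exact Real.sinh_lt_cosh x

lemma neg_one_lt_tanh' (x : ℝ) : -1 < Real.tanh x := by
  have h := tanh_lt_one' (-x)
  rw [Real.tanh_neg] at h; linarith

lemma continuous_tanh' : Continuous Real.tanh := by
  have h : Real.tanh = fun x => Real.sinh x / Real.cosh x :=
    funext fun x => Real.tanh_eq_sinh_div_cosh x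
  rw [h]
  exact Real.continuous_sinh.div Real.continuous_cosh fun x => (Real.cosh_pos x).ne'

lemma cont_cidx (sm RM σx σr : ℝ) (hsm : 0 < sm)
    {N : ℕ} (x : Fin N → EuclideanSpace ℝ (Fin 2)) (s : Fin N → ℝ → ℝ) (i : Fin N)
    (U : Set ℝ)
    (hcont : ∀ j, ContinuousOn (s j) U)
    (hpos : ∀ j, ∀ τ ∈ U, 0 < s j τ) :
    ContinuousOn (fun τ => cIdx sm RM σx σr x s i τ) U := by
  unfold cIdx
  refine continuousOn_const.mul (continuousOn_finset_sum _ fun j hj => ?_)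
  unfold pot
  refine ContinuousOn.mul ?_ ?_
  · refine ContinuousOn.div_const ?_ _
    refine ContinuousOn.log ((hcont j).div_const sm) fun τ hτ => ?_
    exact (div_pos (hpos j τ hτ) hsm).ne'
  · refine continuousOn_const.add (continuous_tanh'.comp_continuousOn ?_)
    refine ContinuousOn.div_const ?_ _
    refine ContinuousOn.log ((hcont j).div (hcont i) fun τ hτ => (hpos i τ hτ).ne')
      fun τ hτ => ?_
    exact (div_pos (hpos j τ hτ) (hpos i τ hτ)).ne'

/-- The explicit representation, assuming positivity of all components on `[0, t]`. -/
lemma formula_of_pos (sm RM σx σr : ℝ) (hsm : 0 < sm)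
    {N : ℕ} (s0 Sa γ : Fin N → ℝ) (x : Fin N → EuclideanSpace ℝ (Fin 2))
    (s : Fin N → ℝ → ℝ) (hs : IsCompetitionSol sm RM σx σr s0 x Sa γ s)
    (i : Fin N) (t : ℝ) (ht : 0 ≤ t)
    (hpos : ∀ j, ∀ τ ∈ Icc (0:ℝ) t, 0 < s j τ) :
    s i t = sm * (s0 i / sm) ^ Real.exp (-(γ i) * t) *
        Real.exp (Real.log (Sa i / sm) * γ i *
          ∫ τ in (0:ℝ)..t,
            (1 - cIdx sm RM σx σr x s i τ) * Real.exp (γ i * (τ - t))) := by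
  have hst : 0 < s i t := hpos i t ⟨ht, le_rfl⟩
  have hs00 : 0 < s0 i := (hs i).1 ▸ hpos i 0 ⟨le_rfl, ht⟩
  have hcontS : ∀ j, ContinuousOn (s j) (Ici 0) :=
    fun j τ hτ => ((hs j).2 τ hτ).continuousWithinAt
  have hIcc : Icc (0:ℝ) t ⊆ Ici 0 := fun τ hτ => hτ.1
  have hcontc : ContinuousOn (fun τ => cIdx sm RM σx σr x s i τ) (Icc 0 t) :=
    cont_cidx sm RM σx σr hsm x s i _ (fun j => (hcontS j).mono hIcc) hpos
  set A := Real.log (Sa i / sm) with hA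
  set E := Real.exp (-(γ i) * t) with hE
  set g : ℝ → ℝ := fun τ => (Real.log (s i τ) - Real.log sm) * Real.exp (γ i * τ) with hg
  set g' : ℝ → ℝ := fun τ =>
    γ i * A * ((1 - cIdx sm RM σx σr x s i τ) * Real.exp (γ i * τ)) with hg'
  -- derivative of g
  have hgderiv : ∀ τ ∈ Ioo (0:ℝ) t, HasDerivWithinAt g (g' τ) (Ioi τ) τ := by
    intro τ hτ
    have hτ0 : (0:ℝ) ≤ τ := hτ.1.le
    have hsτ : 0 < s i τ := hpos i τ ⟨hτ0, hτ.2.le⟩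
    have hd := (hs i).2 τ hτ0
    rw [← hA] at hd
    have hexp : HasDerivAt (fun u : ℝ => Real.exp (γ i * u))
        (Real.exp (γ i * τ) * (γ i * 1)) τ :=
      (Real.hasDerivAt_exp (γ i * τ)).comp τ ((hasDerivAt_id τ).const_mul (γ i))
    have hmul := ((hd.log hsτ.ne').sub_const (Real.log sm)).mul
      (hexp.hasDerivWithinAt (s := Ici 0))
    have hsub : Ioi τ ⊆ Ici (0:ℝ) := fun u hu => le_trans hτ0 (le_of_lt hu)
    have hlogdiv : Real.log (s i τ / sm) = Real.log (s i τ) - Real.log sm :=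
      Real.log_div hsτ.ne' hsm.ne'
    have := hmul.mono hsub
    refine this.congr_deriv ?_
    rw [hlogdiv]
    field_simp
    ring
  -- continuity of g on [0,t]
  have hgcont : ContinuousOn g (Icc 0 t) := by
    refine ContinuousOn.mul ?_ ?_
    · exact (((hcontS i).mono hIcc).log fun τ hτ => (hpos i τ hτ).ne').sub continuousOn_const
    · exact (Real.continuous_exp.comp (continuous_const.mul continuous_id)).continuousOn
  -- integrability of g'
  have hint : IntervalIntegrable g' volume 0 t := by
    apply ContinuousOn.intervalIntegrable
    rw [uIcc_of_le ht]
    exact continuousOn_const.mul ((continuousOn_const.sub hcontc).mul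
      ((Real.continuous_exp.comp (continuous_const.mul continuous_id)).continuousOn))
  have hFTC : ∫ τ in (0:ℝ)..t, g' τ = g t - g 0 :=
    intervalIntegral.integral_eq_sub_of_hasDeriv_right_of_le ht hgcont hgderiv hint
  set J0 := ∫ τ in (0:ℝ)..t, (1 - cIdx sm RM σx σr x s i τ) * Real.exp (γ i * τ) with hJ0
  have hConst : ∫ τ in (0:ℝ)..t, g' τ = γ i * A * J0 := by
    rw [hJ0, ← intervalIntegral.integral_const_mul]
  have h2 : γ i * A * J0 =
      (Real.log (s i t) - Real.log sm) * Real.exp (γ i * t)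
        - (Real.log (s0 i) - Real.log sm) := by
    have h3 := hConst.symm.trans hFTC
    simp only [hg, mul_zero, Real.exp_zero, mul_one, (hs i).1] at h3
    exact h3
  have hPE : Real.exp (γ i * t) * E = 1 := by
    rw [hE, ← Real.exp_add, show γ i * t + -(γ i) * t = 0 by ring, Real.exp_zero]
  have hkey : Real.log (s i t) - Real.log sm =
      ((Real.log (s0 i) - Real.log sm) + γ i * A * J0) * E := by
    linear_combination (-(Real.log (s i t) - Real.log sm)) * hPE - E * h2
  have hI2 : (∫ τ in (0:ℝ)..t,
      (1 - cIdx sm RM σx σr x s i τ) * Real.exp (γ i * (τ - t))) = E * J0 := by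
    rw [hJ0, ← intervalIntegral.integral_const_mul]
    apply intervalIntegral.integral_congr
    intro τ hτ
    show (1 - cIdx sm RM σx σr x s i τ) * Real.exp (γ i * (τ - t)) =
      E * ((1 - cIdx sm RM σx σr x s i τ) * Real.exp (γ i * τ))
    rw [show γ i * (τ - t) = γ i * τ + -(γ i) * t by ring, Real.exp_add, ← hE]
    ring
  have hld : Real.log (s0 i / sm) = Real.log (s0 i) - Real.log sm :=
    Real.log_div hs00.ne' hsm.ne'
  have key : Real.log (s i t) =
      Real.log sm + Real.log (s0 i / sm) * E + A * γ i * (E * J0) := by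
    rw [hld]; linear_combination hkey
  rw [hI2]
  calc s i t = Real.exp (Real.log (s i t)) := (Real.exp_log hst).symm
    _ = sm * (s0 i / sm) ^ E * Real.exp (A * γ i * (E * J0)) := by
        rw [key, Real.exp_add, Real.exp_add, Real.exp_log hsm,
          ← Real.rpow_def_of_pos (div_pos hs00 hsm)]

/-- explicit representation of the solution of the competition system via the
time-averaged competition index. -/
theorem stmt_3 (sm RM σx σr : ℝ) (hsm : 0 < sm) (hRM : 0 < RM) (hσx : 0 < σx) (hσr : 0 < σr)
    (N : ℕ) (hN : 1 < N) (s0 Sa γ : Fin N → ℝ) (x : Fin N → EuclideanSpace ℝ (Fin 2))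
    (hinit : ∀ i, sm < s0 i ∧ s0 i < Sa i)
    (hS : ∀ i, sm < Sa i ∧ Sa i < sm * Real.exp RM)
    (hγ : ∀ i, 0 < γ i)
    (s : Fin N → ℝ → ℝ) (hs : IsCompetitionSol sm RM σx σr s0 x Sa γ s) :
    ∀ i, ∀ t, 0 ≤ t →
      s i t = sm * (s0 i / sm) ^ Real.exp (-(γ i) * t) *
        Real.exp (Real.log (Sa i / sm) * γ i *
          ∫ τ in (0:ℝ)..t,
            (1 - cIdx sm RM σx σr x s i τ) * Real.exp (γ i * (τ - t))) := by
  haveI : Nonempty (Fin N) := ⟨⟨0, by omega⟩⟩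
  have hs0pos : ∀ j, 0 < s0 j := fun j => lt_trans hsm (hinit j).1
  have hcontS : ∀ j, ContinuousOn (s j) (Ici 0) :=
    fun j τ hτ => ((hs j).2 τ hτ).continuousWithinAt
  have hNR : (0:ℝ) < (N:ℝ) - 1 := by
    have h1 : (1:ℝ) < (N:ℝ) := by exact_mod_cast hN
    linarith
  -- global positivity
  have hpos : ∀ t, 0 ≤ t → ∀ j, 0 < s j t := by
    by_contra hcon
    push_neg at hcon
    obtain ⟨t0, ht0, j1, hj1⟩ := hcon
    set Z : Set ℝ := ⋃ j, (Ici 0 ∩ s j ⁻¹' Iic 0) with hZ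
    have hZc : IsClosed Z := isClosed_iUnion_of_finite fun j =>
      (hcontS j).preimage_isClosed_of_isClosed isClosed_Ici isClosed_Iic
    have hZne : Z.Nonempty := ⟨t0, mem_iUnion.2 ⟨j1, ⟨ht0, hj1⟩⟩⟩
    have hZbdd : BddBelow Z :=
      ⟨0, fun z hz => by obtain ⟨j, hj⟩ := mem_iUnion.1 hz; exact hj.1⟩
    set T := sInf Z with hT
    have hTZ : T ∈ Z := hZc.csInf_mem hZne hZbdd
    obtain ⟨j0, hj0mem⟩ := mem_iUnion.1 hTZ
    have hT0 : 0 ≤ T := hj0mem.1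
    have hj0T : s j0 T ≤ 0 := hj0mem.2
    have hTpos : 0 < T := by
      rcases lt_or_eq_of_le hT0 with h | h
      · exact h
      · exfalso
        rw [← h] at hj0T
        rw [(hs j0).1] at hj0T
        linarith [hs0pos j0]
    have hposlt : ∀ τ, 0 ≤ τ → τ < T → ∀ j, 0 < s j τ := by
      intro τ h0τ hτT j
      by_contra hle
      push_neg at hle
      have hmem : τ ∈ Z := mem_iUnion.2 ⟨j, ⟨h0τ, hle⟩⟩
      exact absurd (csInf_le hZbdd hmem) (not_le.2 hτT)
    -- upper bounds for sizes on [0, T]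
    have hMj : ∀ j : Fin N, ∃ M : ℝ, ∀ τ ∈ Icc (0:ℝ) T, s j τ ≤ M := by
      intro j
      obtain ⟨z, hz, hzmax⟩ := isCompact_Icc.exists_isMaxOn (nonempty_Icc.2 hT0)
        ((hcontS j).mono (fun τ hτ => hτ.1))
      exact ⟨s j z, fun τ hτ => hzmax hτ⟩
    choose M hM using hMj
    set L : ℝ := Finset.univ.sup' Finset.univ_nonempty
      (fun j => Real.log (max (M j) sm / sm)) with hL
    have hLj : ∀ j, Real.log (max (M j) sm / sm) ≤ L := by
      intro j
      rw [hL]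
      exact Finset.le_sup' (fun k : Fin N => Real.log (max (M k) sm / sm)) (Finset.mem_univ j)
    have hLnn : 0 ≤ L := by
      have h0 : (0:ℝ) ≤ Real.log (max (M ⟨0, by omega⟩) sm / sm) := by
        apply Real.log_nonneg
        rw [le_div_iff₀ hsm]
        simpa using le_max_right (M (⟨0, by omega⟩ : Fin N)) sm
      exact le_trans h0 (hLj ⟨0, by omega⟩)
    set K := L / RM with hK
    -- bound on the competition index
    have hcbnd : ∀ τ, 0 ≤ τ → τ < T → cIdx sm RM σx σr x s j0 τ ≤ K := by
      intro τ h0τ hτT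
      have hterm : ∀ j ∈ Finset.univ.erase j0,
          pot sm RM σx σr (s j0 τ) (s j τ) (dist (x j0) (x j)) ≤ L / RM := by
        intro j _
        set a := Real.log (s j τ / sm) with ha
        set d := dist (x j0) (x j) with hd
        set D := 2 * RM * (1 + d ^ 2 / σx ^ 2) with hD
        set b := 1 + Real.tanh (Real.log (s j τ / s j0 τ) / σr) with hb
        have hb0 : 0 ≤ b := by
          have := neg_one_lt_tanh' (Real.log (s j τ / s j0 τ) / σr)
          rw [hb]; linarith
        have hb2 : b ≤ 2 := by
          have := tanh_lt_one' (Real.log (s j τ / s j0 τ) / σr)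
          rw [hb]; linarith
        have hD2 : 2 * RM ≤ D := by
          rw [hD]
          have : (0:ℝ) ≤ d ^ 2 / σx ^ 2 := by positivity
          nlinarith
        have hDpos : 0 < D := lt_of_lt_of_le (by linarith) hD2
        have haL : a ≤ L := by
          refine le_trans ?_ (hLj j)
          apply Real.log_le_log (div_pos (hposlt τ h0τ hτT j) hsm)
          gcongr
          exact le_trans (hM j τ ⟨h0τ, hτT.le⟩) (le_max_left _ _)
        show a / D * b ≤ L / RM
        rcases le_or_gt a 0 with hc | hc
        · have h1 : a / D * b ≤ 0 :=
            mul_nonpos_of_nonpos_of_nonneg (div_nonpos_of_nonpos_of_nonneg hc hDpos.le) hb0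
          exact le_trans h1 (by positivity)
        · have h1 : a / D ≤ a / (2 * RM) :=
            div_le_div_of_nonneg_left hc.le (by linarith) hD2
          have h2 : a / D * b ≤ a / (2 * RM) * 2 := by
            have h3 : a / D * b ≤ a / D * 2 :=
              mul_le_mul_of_nonneg_left hb2 (by positivity)
            have h4 : a / D * 2 ≤ a / (2 * RM) * 2 := by linarith
            linarith
          have h5 : a / (2 * RM) * 2 = a / RM := by field_simp
          rw [h5] at h2
          have h6 : a / RM ≤ L / RM := by gcongr
          exact le_trans h2 h6
      have hsum : ∑ j ∈ Finset.univ.erase j0,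
          pot sm RM σx σr (s j0 τ) (s j τ) (dist (x j0) (x j)) ≤ ((N:ℝ) - 1) * (L / RM) := by
        calc ∑ j ∈ Finset.univ.erase j0,
            pot sm RM σx σr (s j0 τ) (s j τ) (dist (x j0) (x j))
            ≤ (Finset.univ.erase j0).card • (L / RM) :=
              Finset.sum_le_card_nsmul _ _ _ hterm
          _ = ((N:ℝ) - 1) * (L / RM) := by
              rw [Finset.card_erase_of_mem (Finset.mem_univ j0), Finset.card_univ,
                Fintype.card_fin, nsmul_eq_mul, Nat.cast_sub hN.le, Nat.cast_one]
      unfold cIdx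
      calc (1 / ((N:ℝ) - 1)) * ∑ j ∈ Finset.univ.erase j0,
          pot sm RM σx σr (s j0 τ) (s j τ) (dist (x j0) (x j))
          ≤ (1 / ((N:ℝ) - 1)) * (((N:ℝ) - 1) * (L / RM)) :=
            mul_le_mul_of_nonneg_left hsum (by positivity)
        _ = K := by rw [hK]; field_simp
    set A := Real.log (Sa j0 / sm) with hA
    have hApos : 0 < A := Real.log_pos (by rw [lt_div_iff₀ hsm]; simpa using (hS j0).1)
    set m := max 0 (K - 1) with hm
    have hm0 : 0 ≤ m := le_max_left _ _
    have hmK : K - 1 ≤ m := le_max_right _ _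
    set ε := sm * Real.exp (-(A * γ j0 * m * T)) with hε
    have hεpos : 0 < ε := by positivity
    -- lower bound for s j0 on [0, T)
    have hlb : ∀ t, 0 ≤ t → t < T → ε ≤ s j0 t := by
      intro t h0t htT
      have hposIcc : ∀ j, ∀ τ ∈ Icc (0:ℝ) t, 0 < s j τ :=
        fun j τ hτ => hposlt τ hτ.1 (lt_of_le_of_lt hτ.2 htT) j
      have hform := formula_of_pos sm RM σx σr hsm s0 Sa γ x s hs j0 t h0t hposIcc
      set I2 := ∫ τ in (0:ℝ)..t,
        (1 - cIdx sm RM σx σr x s j0 τ) * Real.exp (γ j0 * (τ - t)) with hI2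
      -- lower bound on the integral
      have hIlb : -(m * T) ≤ I2 := by
        have hintegrand : IntervalIntegrable
            (fun τ => (1 - cIdx sm RM σx σr x s j0 τ) * Real.exp (γ j0 * (τ - t)))
            volume 0 t := by
          apply ContinuousOn.intervalIntegrable
          rw [uIcc_of_le h0t]
          refine ContinuousOn.mul (continuousOn_const.sub ?_) ?_
          · exact cont_cidx sm RM σx σr hsm x s j0 _
              (fun j => (hcontS j).mono (fun τ hτ => hτ.1)) hposIcc
          · exact (Real.continuous_exp.comp
              (continuous_const.mul (continuous_id.sub continuous_const))).continuousOn
        have hmono : ∀ τ ∈ Icc (0:ℝ) t, -m ≤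
            (1 - cIdx sm RM σx σr x s j0 τ) * Real.exp (γ j0 * (τ - t)) := by
          intro τ hτ
          have hcτ : cIdx sm RM σx σr x s j0 τ ≤ K :=
            hcbnd τ hτ.1 (lt_of_le_of_lt hτ.2 htT)
          have he1 : Real.exp (γ j0 * (τ - t)) ≤ 1 := by
            rw [Real.exp_le_one_iff]
            have := hγ j0
            nlinarith [hτ.2]
          have he0 : 0 < Real.exp (γ j0 * (τ - t)) := Real.exp_pos _
          nlinarith
        have hstep : -(m * t) ≤ I2 := by
          have h := intervalIntegral.integral_mono_on h0t
            (intervalIntegrable_const (c := -m)) hintegrand hmono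
          rw [intervalIntegral.integral_const, smul_eq_mul, ← hI2] at h
          linarith
        have hmt : m * t ≤ m * T := mul_le_mul_of_nonneg_left htT.le hm0
        linarith
      have hrpow : 1 ≤ (s0 j0 / sm) ^ Real.exp (-(γ j0) * t) := by
        apply Real.one_le_rpow ?_ (Real.exp_pos _).le
        rw [le_div_iff₀ hsm]
        simpa using (hinit j0).1.le
      have hexple : Real.exp (-(A * γ j0 * m * T)) ≤ Real.exp (A * γ j0 * I2) := by
        apply Real.exp_le_exp.2
        have h6 : A * γ j0 * (-(m * T)) ≤ A * γ j0 * I2 :=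
          mul_le_mul_of_nonneg_left hIlb (mul_nonneg hApos.le (hγ j0).le)
        have h7 : -(A * γ j0 * m * T) = A * γ j0 * (-(m * T)) := by ring
        linarith
      have hformA : s j0 t = sm * (s0 j0 / sm) ^ Real.exp (-(γ j0) * t) *
          Real.exp (A * γ j0 * I2) := hform
      rw [hε, hformA]
      calc sm * Real.exp (-(A * γ j0 * m * T))
          ≤ sm * Real.exp (A * γ j0 * I2) := mul_le_mul_of_nonneg_left hexple hsm.le
        _ = sm * 1 * Real.exp (A * γ j0 * I2) := by ring
        _ ≤ sm * (s0 j0 / sm) ^ Real.exp (-(γ j0) * t) * Real.exp (A * γ j0 * I2) :=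
            mul_le_mul_of_nonneg_right
              (mul_le_mul_of_nonneg_left hrpow hsm.le) (Real.exp_pos _).le
    -- contradiction by continuity at T
    have hclosure : T ∈ closure (Ico (0:ℝ) T) := by
      rw [closure_Ico hTpos.ne]
      exact ⟨hT0, le_rfl⟩
    haveI hNB : (𝓝[Ico (0:ℝ) T] T).NeBot := mem_closure_iff_nhdsWithin_neBot.1 hclosure
    have htend : Filter.Tendsto (s j0) (𝓝[Ico (0:ℝ) T] T) (𝓝 (s j0 T)) :=
      ((hcontS j0) T hT0).mono (fun u hu => hu.1)
    have hev : ∀ᶠ u in 𝓝[Ico (0:ℝ) T] T, ε ≤ s j0 u :=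
      eventually_nhdsWithin_of_forall fun u hu => hlb u hu.1 hu.2
    have : ε ≤ s j0 T := ge_of_tendsto htend hev
    linarith
  intro i t ht
  exact formula_of_pos sm RM σx σr hsm s0 Sa γ x s hs i t ht
    (fun j τ hτ => hpos τ hτ.1 j)
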